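/- arXiv:2308.14932 — 4 statements merged into one kernel-verified Lean document; each statement's English description precedes it below -/
import Mathlib

section
/- Let (R, m, k) be a Noetherian local ring, let s and t be positive integers, and let x ∈ m^t \ m^{t+1} be a nonzerodivisor on R. Suppose that for each i with 1 ≤ i ≤ s the map m^{i-1}/m^i → m^{i+t-1}/m^{i+t} induced by multiplication by x is injective. Then there is an isomorphism of R-modules (m^{s+t-1} + xR)/x m^s ≅ R/m^s ⊕ (m^{s+t-1} + xR)/xR. -/
open IsLocalRing Submodule

lemma extend_lemma {R : Type*} [CommRing R] [IsLocalRing R]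
    {P M T : Type*} [AddCommGroup P] [Module R P] [AddCommGroup M] [Module R M]
    [AddCommGroup T] [Module R T]
    (i : P →ₗ[R] M) (f : P →ₗ[R] T)
    (hf : ∀ p : P, i p ∈ (maximalIdeal R • ⊤ : Submodule R M) → f p = 0) :
    ∃ g : M →ₗ[R] T, ∀ p : P, g (i p) = f p := by
  classical
  set mM : Submodule R M := maximalIdeal R • ⊤ with hmM
  set G0 : Submodule R (M × T) :=
    LinearMap.range (i.prod f) ⊔ mM.map (LinearMap.inl R M T) with hG0
  set S : Set (Submodule R (M × T)) :=
    {G | G0 ≤ G ∧ ∀ v : T, ((0 : M), v) ∈ G → v = 0} with hS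
  have hG0S : G0 ∈ S := by
    refine ⟨le_rfl, ?_⟩
    intro v hv
    rw [hG0, Submodule.mem_sup] at hv
    obtain ⟨a, ha, b, hb, hab⟩ := hv
    obtain ⟨p, rfl⟩ := ha
    obtain ⟨z, hz, rfl⟩ := Submodule.mem_map.1 hb
    simp only [LinearMap.prod_apply, Function.prod, LinearMap.inl_apply, Prod.mk_add_mk,
      Prod.mk.injEq] at hab
    obtain ⟨h1, h2⟩ := hab
    have hip : i p ∈ mM := by
      have : i p = -z := by linear_combination (norm := module) h1
      rw [this]; exact neg_mem hz
    rw [← h2, add_zero]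
    exact hf p hip
  obtain ⟨G, hG0G, hGS, hGmax⟩ := by
    refine zorn_le_nonempty₀ S ?_ G0 hG0S
    intro c hcS hchain y hyc
    refine ⟨sSup c, ⟨le_trans (hcS hyc).1 (le_sSup hyc), ?_⟩, fun z hz => le_sSup hz⟩
    intro v hv
    obtain ⟨p, hpc, hvp⟩ := (Submodule.mem_sSup_of_directed ⟨y, hyc⟩ hchain.directedOn).1 hv
    exact (hcS hpc).2 v hvp
  have huniq : ∀ (y : M) (v v' : T), (y, v) ∈ G → (y, v') ∈ G → v = v' := by
    intro y v v' h1 h2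
    have h3 : ((0 : M), v - v') ∈ G := by
      have := sub_mem h1 h2
      simpa using this
    have := hGS.2 _ h3
    exact sub_eq_zero.1 this
  have hdom : ∀ y : M, ∃ v : T, (y, v) ∈ G := by
    by_contra h
    push_neg at h
    obtain ⟨y, hy⟩ := h
    have hG'S : G ⊔ span R {((y, 0) : M × T)} ∈ S := by
      refine ⟨le_trans hGS.1 le_sup_left, ?_⟩
      intro v hv
      rw [Submodule.mem_sup] at hv
      obtain ⟨a, ha, b, hb, hab⟩ := hv
      obtain ⟨r, rfl⟩ := Submodule.mem_span_singleton.1 hb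
      by_cases hr : IsUnit r
      · exfalso
        have ha' : -a = ((r • y : M), (-v : T)) := by
          have : -a = r • ((y,0) : M × T) - (0, v) := by
            rw [← hab]; abel
          rw [this]; simp [Prod.smul_mk, Prod.ext_iff]
        obtain ⟨u, rfl⟩ := hr
        have hmem : ((u⁻¹ : Rˣ) : R) • (-a) ∈ G := Submodule.smul_mem G _ (neg_mem ha)
        have heq : ((u⁻¹ : Rˣ) : R) • (-a) = (y, ((u⁻¹ : Rˣ) : R) • (-v)) := by
          rw [ha']
          simp only [Prod.smul_mk, smul_smul, Units.inv_mul, one_smul]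
        exact hy _ (heq ▸ hmem)
      · have hrm : r ∈ maximalIdeal R := hr
        have h2 : ((r • y : M), (0 : T)) ∈ G := by
          refine hGS.1 ?_
          rw [hG0]
          exact Submodule.mem_sup_right (Submodule.mem_map_of_mem (Submodule.smul_mem_smul hrm trivial))
        have h3 : ((0 : M), v) ∈ G := by
          have : ((0:M), v) = a + (r • y, (0:T)) := by
            rw [← hab]; simp [Prod.smul_mk]
          rw [this]; exact add_mem ha h2
        exact hGS.2 v h3
    have hle := hGmax hG'S le_sup_left
    have : ((y, 0) : M × T) ∈ G := hle (Submodule.mem_sup_right (Submodule.mem_span_singleton_self _))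
    exact hy 0 this
  choose gv hgv using hdom
  refine ⟨{ toFun := gv, map_add' := ?_, map_smul' := ?_ }, ?_⟩
  · intro a b
    exact huniq _ _ _ (hgv (a + b)) (by simpa using add_mem (hgv a) (hgv b))
  · intro r a
    exact huniq _ _ _ (hgv (r • a)) (by simpa [Prod.smul_mk] using Submodule.smul_mem G r (hgv a))
  · intro p
    refine huniq _ _ _ (hgv (i p)) (hGS.1 ?_)
    rw [hG0]
    exact Submodule.mem_sup_left ⟨p, rfl⟩

set_option maxHeartbeats 1000000 in
/-- Let `(R, m, k)` be a Noetherian local ring, `s, t` positive integers,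
`x ∈ m^t \ m^{t+1}` a nonzerodivisor on `R`.  Suppose that for each `1 ≤ i ≤ s` the map
`m^{i-1}/m^i → m^{i+t-1}/m^{i+t}` induced by multiplication by `x` is injective
(encoded elementwise: if `r ∈ m^{i-1}` and `x*r ∈ m^{i+t}` then `r ∈ m^i`).  Then
`(m^{s+t-1} + xR)/(x·m^s) ≅ R/m^s ⊕ (m^{s+t-1} + xR)/(xR)` as `R`-modules. -/
theorem stmt_0 {R : Type*} [CommRing R] [IsLocalRing R] [IsNoetherianRing R]
    (s t : ℕ) (hs : 0 < s) (ht : 0 < t) (x : R)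
    (hxt : x ∈ maximalIdeal R ^ t) (hxt' : x ∉ maximalIdeal R ^ (t + 1))
    (hxreg : x ∈ nonZeroDivisors R)
    (hinj : ∀ i : ℕ, 1 ≤ i → i ≤ s → ∀ r ∈ maximalIdeal R ^ (i - 1),
      x * r ∈ maximalIdeal R ^ (i + t) → r ∈ maximalIdeal R ^ i)
    (I : Ideal R) (hI : I = maximalIdeal R ^ (s + t - 1) ⊔ Ideal.span {x}) :
    Nonempty
      ((↥I ⧸ Submodule.comap I.subtype (Ideal.span {x} * maximalIdeal R ^ s)) ≃ₗ[R]
        (R ⧸ maximalIdeal R ^ s) ×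
          (↥I ⧸ Submodule.comap I.subtype (Ideal.span {x}))) := by
  classical
  set m : Ideal R := maximalIdeal R with hm
  -- iterated injectivity
  have hchain : ∀ j : ℕ, j ≤ s → ∀ u : R, x * u ∈ m ^ (j + t) → u ∈ m ^ j := by
    intro j
    induction j with
    | zero => intro _ u _; simp [Ideal.one_eq_top]
    | succ j ih =>
      intro hj u hu
      have h1 : u ∈ m ^ j :=
        ih (by omega) u (Ideal.pow_le_pow_right (by omega) hu)
      have h2 := hinj (j + 1) (by omega) hj u (by simpa using h1) hu
      exact h2
  have F1 : ∀ u : R, x * u ∈ m ^ (s + t) → u ∈ m ^ s := hchain s le_rfl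
  have F2 : ∀ u : R, x * u ∈ m ^ (s + t - 1) → u ∈ m ^ (s - 1) := by
    intro u hu
    exact hchain (s - 1) (by omega) u (by rwa [show s - 1 + t = s + t - 1 by omega])
  have hxmul : ∀ u : R, u ∈ m ^ (s - 1) → x * u ∈ m ^ (s + t - 1) := by
    intro u hu
    have h := Ideal.mul_mem_mul hxt hu
    rwa [← pow_add, show t + (s - 1) = s + t - 1 by omega] at h
  -- the target torsion module T
  set T := (↥(m ^ (s - 1)) ⧸ (m • ⊤ : Submodule R ↥(m ^ (s - 1)))) with hT
  -- the multiplication-by-x map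
  set i : ↥(m ^ (s - 1)) →ₗ[R] ↥(m ^ (s + t - 1)) :=
    { toFun := fun u => ⟨x * ↑u, hxmul _ u.2⟩
      map_add' := by intro a b; apply Subtype.ext; simp [mul_add]
      map_smul' := by
        intro r a; apply Subtype.ext
        simp [smul_eq_mul]; ring } with hi
  obtain ⟨σ, hσ⟩ := extend_lemma i (Submodule.mkQ (m • ⊤ : Submodule R ↥(m ^ (s - 1))))
    (by
      intro p hp
      rw [Submodule.mem_smul_top_iff, Ideal.smul_eq_mul] at hp
      have hx : x * (p : R) ∈ m ^ (s + t) := by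
        rwa [show m ^ (s + t) = m * m ^ (s + t - 1) by
          rw [← pow_succ', show s + t - 1 + 1 = s + t by omega]] 
      have hps : (p : R) ∈ m ^ s := F1 _ hx
      rw [Submodule.mkQ_apply, Submodule.Quotient.mk_eq_zero]
      rw [Submodule.mem_smul_top_iff, Ideal.smul_eq_mul]
      rwa [show m * m ^ (s - 1) = m ^ s by
        rw [← pow_succ', show s - 1 + 1 = s by omega]] )
  -- map T → R/m^s
  set ι : T →ₗ[R] (R ⧸ m ^ s) :=
    Submodule.liftQ _ ((m ^ s).mkQ ∘ₗ (m ^ (s - 1)).subtype)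
      (by
        intro z hz
        rw [Submodule.mem_smul_top_iff, Ideal.smul_eq_mul] at hz
        have : (z : R) ∈ m ^ s := by
          rwa [show m * m ^ (s - 1) = m ^ s by
            rw [← pow_succ', show s - 1 + 1 = s by omega]] at hz
        simp only [LinearMap.mem_ker, LinearMap.comp_apply, Submodule.subtype_apply,
          Submodule.mkQ_apply, Submodule.Quotient.mk_eq_zero]
        exact this) with hι
  set σ' : ↥(m ^ (s + t - 1)) →ₗ[R] (R ⧸ m ^ s) := ι ∘ₗ σ with hσ'def
  have hσ' : ∀ (u : R) (hu : u ∈ m ^ (s - 1)),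
      σ' ⟨x * u, hxmul _ hu⟩ = (m ^ s).mkQ u := by
    intro u hu
    have h1 : σ' (i ⟨u, hu⟩) = ι (Submodule.mkQ _ ⟨u, hu⟩) := by
      rw [hσ'def, LinearMap.comp_apply, hσ]
    have h2 : i ⟨u, hu⟩ = (⟨x * u, hxmul _ hu⟩ : ↥(m ^ (s + t - 1))) := rfl
    rw [h2] at h1
    rw [h1, hι, Submodule.mkQ_apply, Submodule.liftQ_apply]
    simp
  subst hI
  set I : Ideal R := m ^ (s + t - 1) ⊔ Ideal.span {x} with hIdef
  have hxrI : ∀ r : R, x * r ∈ I := by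
    intro r
    have hx1 : x * r ∈ Ideal.span {x} := by
      rw [mul_comm]
      exact Ideal.mul_mem_left _ r (Ideal.mem_span_singleton_self x)
    exact Submodule.mem_sup_right hx1
  -- the presentation p
  set p : (↥(m ^ (s + t - 1)) × R) →ₗ[R] ↥I :=
    { toFun := fun z => ⟨↑z.1 + x * z.2, add_mem (Submodule.mem_sup_left z.1.2) (hxrI z.2)⟩
      map_add' := by intro a b; apply Subtype.ext; simp [mul_add]; ring
      map_smul' := by intro r a; apply Subtype.ext; simp [smul_eq_mul]; ring } with hp
  have hpsurj : Function.Surjective p := by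
    intro a
    obtain ⟨y, hy, z, hz, hyz⟩ := Submodule.mem_sup.1 a.2
    obtain ⟨r, hr⟩ := Ideal.mem_span_singleton'.1 hz
    refine ⟨(⟨y, hy⟩, r), Subtype.ext ?_⟩
    show y + x * r = (a : R)
    rw [mul_comm x r, hr, hyz]
  set ψ : (↥(m ^ (s + t - 1)) × R) →ₗ[R] (R ⧸ m ^ s) :=
    σ' ∘ₗ (LinearMap.fst R _ _) + (m ^ s).mkQ ∘ₗ (LinearMap.snd R _ _) with hψ
  have hker : LinearMap.ker p ≤ LinearMap.ker ψ := by
    intro z hz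
    rw [LinearMap.mem_ker] at hz
    have h0 : (↑z.1 : R) + x * z.2 = 0 := congrArg Subtype.val hz
    have h1 : (↑z.1 : R) = x * (-z.2) := by linear_combination h0
    have h2 : -z.2 ∈ m ^ (s - 1) := F2 _ (by rw [← h1]; exact z.1.2)
    have h3 : z.1 = (⟨x * (-z.2), hxmul _ h2⟩ : ↥(m ^ (s + t - 1))) := Subtype.ext h1
    rw [LinearMap.mem_ker, hψ]
    simp only [LinearMap.add_apply, LinearMap.comp_apply, LinearMap.fst_apply,
      LinearMap.snd_apply]
    rw [h3, hσ' _ h2, ← map_add]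
    simp
  set e := p.quotKerEquivOfSurjective hpsurj with he
  set φ : ↥I →ₗ[R] (R ⧸ m ^ s) :=
    (Submodule.liftQ (LinearMap.ker p) ψ hker) ∘ₗ (e.symm : ↥I →ₗ[R] _) with hφdef
  have hφ : ∀ z, φ (p z) = ψ z := by
    intro z
    have heq : e (Submodule.Quotient.mk z) = p z := by
      rw [he]
      rfl
    have h2 : e.symm (p z) = Submodule.Quotient.mk z := by
      rw [← heq, LinearEquiv.symm_apply_apply]
    rw [hφdef, LinearMap.comp_apply, LinearEquiv.coe_coe, h2, Submodule.liftQ_apply]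
  have hφx : ∀ (r : R) (h : x * r ∈ I), φ ⟨x * r, h⟩ = (m ^ s).mkQ r := by
    intro r h
    have h1 : (⟨x * r, h⟩ : ↥I) = p (0, r) := Subtype.ext (by simp [hp])
    rw [h1, hφ, hψ]
    simp
  set K := Submodule.comap I.subtype (Ideal.span {x} * m ^ s) with hK
  set Φ : ↥I →ₗ[R] (R ⧸ m ^ s) × (↥I ⧸ Submodule.comap I.subtype (Ideal.span {x})) :=
    φ.prod (Submodule.mkQ _) with hΦ
  have hKker : K ≤ LinearMap.ker Φ := by
    intro a ha
    rw [hK, Submodule.mem_comap] at ha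
    obtain ⟨u, hu, hxu⟩ := Ideal.mem_span_singleton_mul.1 ha
    have ha' : a = ⟨x * u, hxu ▸ a.2⟩ := Subtype.ext hxu.symm
    rw [LinearMap.mem_ker, hΦ, LinearMap.prod_apply]
    refine Prod.ext ?_ ?_
    · show φ a = 0
      rw [ha', hφx, Submodule.mkQ_apply]
      exact (Submodule.Quotient.mk_eq_zero _).2 hu
    · show Submodule.mkQ _ a = 0
      rw [Submodule.mkQ_apply, Submodule.Quotient.mk_eq_zero, Submodule.mem_comap]
      rw [← hxu, mul_comm]
      exact Ideal.mul_mem_left _ _ (Ideal.mem_span_singleton_self x)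
  have hkerK : LinearMap.ker Φ ≤ K := by
    intro a ha
    rw [LinearMap.mem_ker] at ha
    have h1 : φ a = 0 := congrArg Prod.fst ha
    have h2 : Submodule.mkQ (Submodule.comap I.subtype (Ideal.span {x})) a = 0 :=
      congrArg Prod.snd ha
    have h2' : (a : R) ∈ Ideal.span {x} := by
      rwa [Submodule.mkQ_apply, Submodule.Quotient.mk_eq_zero, Submodule.mem_comap] at h2
    obtain ⟨r, hr⟩ := Ideal.mem_span_singleton'.1 h2'
    have har : a = (⟨x * r, hxrI r⟩ : ↥I) := Subtype.ext (by rw [← hr, mul_comm])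
    have h1' : (m ^ s).mkQ r = 0 := by rw [← hφx r (hxrI r), ← har]; exact h1
    have hrm : r ∈ m ^ s := by
      rwa [Submodule.mkQ_apply, Submodule.Quotient.mk_eq_zero] at h1'
    rw [hK, Submodule.mem_comap]
    show (a : R) ∈ Ideal.span {x} * m ^ s
    rw [har]
    exact Ideal.mul_mem_mul (Ideal.mem_span_singleton_self x) hrm
  set Φ' := Submodule.liftQ K Φ hKker with hΦ'
  have hinj' : Function.Injective Φ' := by
    rw [← LinearMap.ker_eq_bot]
    exact Submodule.ker_liftQ_eq_bot K Φ hKker hkerK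
  have hsurj' : Function.Surjective Φ' := by
    rintro ⟨c, b⟩
    obtain ⟨b', rfl⟩ := Submodule.mkQ_surjective _ b
    obtain ⟨r, hr⟩ := Submodule.mkQ_surjective (m ^ s) (c - φ b')
    refine ⟨Submodule.Quotient.mk (b' + ⟨x * r, hxrI r⟩), ?_⟩
    rw [hΦ']
    rw [Submodule.liftQ_apply]
    rw [hΦ]
    refine Prod.ext ?_ ?_
    · show φ (b' + ⟨x * r, hxrI r⟩) = c
      rw [map_add, hφx r (hxrI r), hr]
      ring
    · show Submodule.mkQ _ (b' + ⟨x * r, hxrI r⟩) = Submodule.mkQ _ b'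
      rw [map_add]
      have : Submodule.mkQ (Submodule.comap I.subtype (Ideal.span {x}))
          (⟨x * r, hxrI r⟩ : ↥I) = 0 := by
        rw [Submodule.mkQ_apply, Submodule.Quotient.mk_eq_zero, Submodule.mem_comap]
        show x * r ∈ Ideal.span {x}
        rw [mul_comm]
        exact Ideal.mul_mem_left _ r (Ideal.mem_span_singleton_self x)
      rw [this, add_zero]
  exact ⟨LinearEquiv.ofBijective Φ' ⟨hinj', hsurj'⟩⟩
end

section
/- Let (R, m) be a Noetherian local ring, I ⊆ R an ideal, and x, y ∈ m elements such that the ideal I + xR equals the principal ideal (y). If I is not a principal ideal, then (x) = (y). -/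
open IsLocalRing

/-- Let `(R, m)` be a Noetherian local ring, `I ⊆ R` an ideal and
`x, y ∈ m` such that `I + xR = (y)`.  If `I` is not principal, then `(x) = (y)`. -/
theorem stmt_1 {R : Type*} [CommRing R] [IsLocalRing R] [IsNoetherianRing R]
    (I : Ideal R) (x y : R) (hx : x ∈ maximalIdeal R) (hy : y ∈ maximalIdeal R)
    (hxy : I ⊔ Ideal.span {x} = Ideal.span {y})
    (hI : ¬ I.IsPrincipal) :
    Ideal.span {x} = Ideal.span {y} := by
  -- x ∈ (y), so x = y * a
  have hxmem : x ∈ Ideal.span ({y} : Set R) := by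
    rw [← hxy]; exact Ideal.mem_sup_right (Ideal.mem_span_singleton_self x)
  obtain ⟨a, ha⟩ := Ideal.mem_span_singleton.mp hxmem
  -- y ∈ I ⊔ (x)
  have hymem : y ∈ I ⊔ Ideal.span ({x} : Set R) := by
    rw [hxy]; exact Ideal.mem_span_singleton_self y
  obtain ⟨i, hiI, s, hs, hsum⟩ := Submodule.mem_sup.mp hymem
  obtain ⟨r, hr⟩ := Ideal.mem_span_singleton.mp hs
  have key : y * (1 - a * r) ∈ I := by
    have : y * (1 - a * r) = i := by
      rw [hr, ha] at hsum; linear_combination -hsum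
    rwa [this]
  rcases IsLocalRing.isUnit_or_isUnit_one_sub_self (a * r) with h | h
  · -- a * r unit ⇒ a unit ⇒ span{x} = span{y}
    have ha' : IsUnit a := isUnit_of_mul_isUnit_left h
    rw [ha, Ideal.span_singleton_mul_right_unit ha']
  · -- 1 - a*r unit ⇒ y ∈ I ⇒ I = (y) principal, contradiction
    exfalso
    have hyI : y ∈ I := by
      have := I.mul_mem_right ↑h.unit⁻¹ key
      rwa [mul_assoc, IsUnit.mul_val_inv, mul_one] at this
    have hIeq : I = Ideal.span {y} := by
      apply le_antisymm
      · rw [← hxy]; exact le_sup_left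
      · rwa [Ideal.span_singleton_le_iff_mem]
    exact hI ⟨⟨y, by rw [hIeq]⟩⟩
end

section
/- Let S = k⟦x,y⟧ with maximal ideal n, let f ∈ n with f ∈ n^e \ n^{e+1}, and let R = S/(f) with maximal ideal m. Let g = gℓℓ(R), let i ≥ 0 be an integer, and let z ∈ m be an element with m^g ⊆ (z). If gℓℓ(R) ≤ e + i, then ord_R(z) ≤ i + 1. -/
/-- A system of parameters for `R` relative to the ideal `m` (intended to be the maximal
ideal of the local ring `R`): a finite set whose cardinality is the Krull dimension of `R`
and which generates an `m`-primary ideal. -/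
def IsSOP (R : Type*) [CommRing R] (m : Ideal R) (s : Set R) : Prop :=
  s.Finite ∧ ringKrullDim R = (s.ncard : WithBot ℕ∞) ∧ ∃ N : ℕ, m ^ N ≤ Ideal.span s

/-- The generalized Loewy length of `R` relative to the ideal `m` (intended to be the
maximal ideal of the local ring `R`): the smallest positive integer `n` such that `m ^ n`
is contained in an ideal generated by a system of parameters. -/
noncomputable def gll (R : Type*) [CommRing R] (m : Ideal R) : ℕ :=
  sInf {n : ℕ | 0 < n ∧ ∃ s : Set R, IsSOP R m s ∧ m ^ n ≤ Ideal.span s}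

set_option synthInstance.maxHeartbeats 1000000
set_option maxHeartbeats 1000000

open IsLocalRing MvPowerSeries

namespace Stmt2Aux

variable {k : Type*} [Field k]

local notation "S" => MvPowerSeries (Fin 2) k

noncomputable abbrev xx : MvPowerSeries (Fin 2) k := MvPowerSeries.X 0
noncomputable abbrev yy : MvPowerSeries (Fin 2) k := MvPowerSeries.X 1

lemma coeff_X_mul' (i : Fin 2) (φ : MvPowerSeries (Fin 2) k) (s : Fin 2 →₀ ℕ) :
    (MvPowerSeries.coeff (R := k) (σ := Fin 2)) s (MvPowerSeries.X i * φ)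
      = if Finsupp.single i 1 ≤ s then (MvPowerSeries.coeff (R := k) (σ := Fin 2)) (s - Finsupp.single i 1) φ else 0 := by
  rw [MvPowerSeries.X_def, MvPowerSeries.coeff_monomial_mul]
  split_ifs <;> simp

/-- if all coefficients with `i`-th exponent zero vanish, `X i` divides. -/
lemma X_dvd_of_coeff (i : Fin 2) (u : MvPowerSeries (Fin 2) k)
    (h : ∀ s : Fin 2 →₀ ℕ, s i = 0 → (MvPowerSeries.coeff (R := k) (σ := Fin 2)) s u = 0) :
    ∃ t : MvPowerSeries (Fin 2) k, u = MvPowerSeries.X i * t := by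
  refine ⟨(fun s => (MvPowerSeries.coeff (R := k) (σ := Fin 2)) (s + Finsupp.single i 1) u : MvPowerSeries (Fin 2) k), ?_⟩
  ext s
  refine Eq.trans ?_ (coeff_X_mul' i _ s).symm
  split_ifs with hle
  · show (MvPowerSeries.coeff (R := k) (σ := Fin 2)) s u
      = (MvPowerSeries.coeff (R := k) (σ := Fin 2)) ((s - Finsupp.single i 1) + Finsupp.single i 1) u
    rw [tsub_add_cancel_of_le hle]
  · rw [Finsupp.single_le_iff] at hle
    exact h s (by omega)

lemma Xne (i : Fin 2) : (MvPowerSeries.X i : MvPowerSeries (Fin 2) k) ≠ 0 := by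
  intro h
  have := congrArg ((MvPowerSeries.coeff (R := k) (σ := Fin 2)) (Finsupp.single i 1)) h
  rw [MvPowerSeries.coeff_index_single_self_X, map_zero] at this
  exact one_ne_zero this

lemma swap_lemma (u v : MvPowerSeries (Fin 2) k) (h : yy * u = xx * v) :
    ∃ t, u = xx * t ∧ v = yy * t := by
  have hu : ∃ t, u = xx * t := by
    apply X_dvd_of_coeff
    intro s hs0
    have := congrArg ((MvPowerSeries.coeff (R := k) (σ := Fin 2)) (s + Finsupp.single 1 1)) h
    rw [coeff_X_mul', coeff_X_mul'] at this
    rw [if_pos (le_add_self), add_tsub_cancel_right] at this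
    rw [if_neg] at this
    · exact this
    · rw [Finsupp.single_le_iff]
      simp [hs0]
  obtain ⟨t, ht⟩ := hu
  refine ⟨t, ht, ?_⟩
  have hx : (xx : MvPowerSeries (Fin 2) k) ≠ 0 := Xne 0
  apply mul_left_cancel₀ hx
  rw [← h, ht]
  ring

/-- base case of unmixedness -/
lemma base_unmixed (f w : MvPowerSeries (Fin 2) k) (hf : f ≠ 0)
    (hx : xx * w ∈ Ideal.span {f}) (hy : yy * w ∈ Ideal.span {f}) :
    w ∈ Ideal.span {f} := by
  obtain ⟨u, hu⟩ := Ideal.mem_span_singleton'.mp hx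
  obtain ⟨v, hv⟩ := Ideal.mem_span_singleton'.mp hy
  have h1 : (yy * u - xx * v) * f = 0 := by
    have : yy * (u * f) = xx * (v * f) := by
      rw [hu, hv]; ring
    linear_combination this
  have h2 : yy * u = xx * v :=
    sub_eq_zero.mp ((mul_eq_zero.mp h1).resolve_right hf)
  obtain ⟨t, htu, htv⟩ := swap_lemma u v h2
  refine Ideal.mem_span_singleton'.mpr ⟨t, ?_⟩
  have hx2 : (xx : MvPowerSeries (Fin 2) k) ≠ 0 := Xne 0
  apply mul_left_cancel₀ hx2
  rw [← hu, htu]; ring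

lemma X_mem_max (i : Fin 2) :
    (MvPowerSeries.X i : MvPowerSeries (Fin 2) k) ∈ maximalIdeal (MvPowerSeries (Fin 2) k) := by
  rw [IsLocalRing.mem_maximalIdeal, mem_nonunits_iff, MvPowerSeries.isUnit_iff_constantCoeff,
    MvPowerSeries.constantCoeff_X]
  exact not_isUnit_zero

/-- unmixedness: if `n^M * w ⊆ (f)` then `w ∈ (f)`. -/
lemma unmixed (f : MvPowerSeries (Fin 2) k) (hf : f ≠ 0) :
    ∀ (M : ℕ) (w : MvPowerSeries (Fin 2) k),
      (∀ u ∈ (maximalIdeal (MvPowerSeries (Fin 2) k)) ^ M, u * w ∈ Ideal.span {f}) →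
      w ∈ Ideal.span {f} := by
  intro M
  induction M with
  | zero =>
    intro w h
    simpa using h 1 (by simp)
  | succ M ih =>
    intro w h
    apply ih
    intro v hv
    apply base_unmixed f (v * w) hf
    · have : xx * v ∈ (maximalIdeal (MvPowerSeries (Fin 2) k)) ^ (M + 1) := by
        rw [pow_succ']
        exact Ideal.mul_mem_mul (X_mem_max 0) hv
      have := h _ this
      rwa [mul_assoc] at this
    · have : yy * v ∈ (maximalIdeal (MvPowerSeries (Fin 2) k)) ^ (M + 1) := by
        rw [pow_succ']
        exact Ideal.mul_mem_mul (X_mem_max 1) hv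
      have := h _ this
      rwa [mul_assoc] at this

/-- Koszul kernel lemma. -/
lemma koszul_ker (f Z α β : MvPowerSeries (Fin 2) k) (hf : f ≠ 0) (N : ℕ)
    (hspan : ∀ u ∈ (maximalIdeal (MvPowerSeries (Fin 2) k)) ^ N,
        ∃ p q, u = p * f + q * Z)
    (hrel : α * f + β * Z = 0) :
    ∃ τ, α = -(τ * Z) ∧ β = τ * f := by
  have hβ : β ∈ Ideal.span {f} := by
    apply unmixed f hf N
    intro u hu
    obtain ⟨p, q, hpq⟩ := hspan u hu
    refine Ideal.mem_span_singleton'.mpr ⟨p * β - q * α, ?_⟩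
    linear_combination (-β) * hpq - q * hrel
  obtain ⟨τ, hτ⟩ := Ideal.mem_span_singleton'.mp hβ
  refine ⟨τ, ?_, hτ.symm⟩
  have h0 : (α + τ * Z) * f = 0 := by
    linear_combination hrel + Z * hτ
  have h5 := (mul_eq_zero.mp h0).resolve_right hf
  linear_combination h5

/-- The core contradiction (Wiebe determinant trick). -/
lemma core (f Z a b c d P Q : MvPowerSeries (Fin 2) k) (hfne : f ≠ 0)
    (hf : f = a * xx + b * yy) (hZ : Z = c * xx + d * yy) (N : ℕ)
    (hspan : ∀ u ∈ (maximalIdeal (MvPowerSeries (Fin 2) k)) ^ N,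
        ∃ p q, u = p * f + q * Z)
    (hΔ : a * d - b * c = P * f + Q * Z) : False := by
  have h1 : (d - P * xx) * f + (-b - Q * xx) * Z = 0 := by
    rw [hf, hZ]; rw [hf, hZ] at hΔ
    linear_combination xx * hΔ
  have h2 : (-c - P * yy) * f + (a - Q * yy) * Z = 0 := by
    rw [hf, hZ]; rw [hf, hZ] at hΔ
    linear_combination yy * hΔ
  obtain ⟨τ₁, hτ₁α, hτ₁β⟩ := koszul_ker f Z _ _ hfne N hspan h1
  obtain ⟨τ₂, hτ₂α, hτ₂β⟩ := koszul_ker f Z _ _ hfne N hspan h2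
  -- a = τ₂ * f + Q * yy ; b = -(τ₁ * f) - Q * xx
  have hfinal : f * (1 - (τ₂ * xx - τ₁ * yy)) = 0 := by
    linear_combination hf + xx * hτ₂β - yy * hτ₁β
  have h3 : (1 : MvPowerSeries (Fin 2) k) - (τ₂ * xx - τ₁ * yy) = 0 :=
    (mul_eq_zero.mp hfinal).resolve_left hfne
  have h4 := congrArg ((MvPowerSeries.constantCoeff (σ := Fin 2) (R := k))) h3
  simp [MvPowerSeries.constantCoeff_X] at h4

lemma max_eq_span :
    maximalIdeal (MvPowerSeries (Fin 2) k)
      = Ideal.span {(xx : MvPowerSeries (Fin 2) k), yy} := by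
  apply le_antisymm
  · intro φ hφ
    have hc : (MvPowerSeries.constantCoeff (σ := Fin 2) (R := k)) φ = 0 := by
      by_contra hc
      exact (IsLocalRing.mem_maximalIdeal φ).mp hφ
        (MvPowerSeries.isUnit_iff_constantCoeff.mpr (Ne.isUnit hc))
    set ψ : MvPowerSeries (Fin 2) k :=
      fun s => if s 0 = 0 then (MvPowerSeries.coeff (R := k) (σ := Fin 2)) s φ else 0 with hψdef
    have hψcoeff : ∀ s : Fin 2 →₀ ℕ,
        (MvPowerSeries.coeff (R := k) (σ := Fin 2)) s ψ = if s 0 = 0 then (MvPowerSeries.coeff (R := k) (σ := Fin 2)) s φ else 0 :=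
      fun s => rfl
    obtain ⟨φ₂, hφ₂⟩ := X_dvd_of_coeff (k := k) 1 ψ (by
      intro s hs1
      rw [hψcoeff]
      by_cases h0 : s 0 = 0
      · have hs : s = 0 := by
          ext j
          fin_cases j <;> simp [h0, hs1]
        rw [if_pos h0, hs]
        exact hc
      · rw [if_neg h0])
    obtain ⟨φ₁, hφ₁⟩ := X_dvd_of_coeff (k := k) 0 (φ - ψ) (by
      intro s hs0
      rw [map_sub, hψcoeff, if_pos hs0, sub_self])
    have hdecomp : φ = xx * φ₁ + yy * φ₂ := by
      rw [← hφ₁, ← hφ₂]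
      ring
    rw [hdecomp]
    exact Ideal.add_mem _
      (Ideal.mul_mem_right _ _ (Ideal.subset_span (by simp)))
      (Ideal.mul_mem_right _ _ (Ideal.subset_span (by simp)))
  · rw [Ideal.span_le]
    rintro w (rfl | rfl)
    · exact X_mem_max 0
    · exact X_mem_max 1

/-- splitting: an element of `n^(j+1)` can be written `a*x + b*y` with `a b ∈ n^j`. -/
lemma split (j : ℕ) (φ : MvPowerSeries (Fin 2) k)
    (hφ : φ ∈ (maximalIdeal (MvPowerSeries (Fin 2) k)) ^ (j + 1)) :
    ∃ a b, a ∈ (maximalIdeal (MvPowerSeries (Fin 2) k)) ^ j ∧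
      b ∈ (maximalIdeal (MvPowerSeries (Fin 2) k)) ^ j ∧ φ = a * xx + b * yy := by
  have h1 : (maximalIdeal (MvPowerSeries (Fin 2) k)) ^ (j + 1)
      = (maximalIdeal (MvPowerSeries (Fin 2) k)) ^ j * Ideal.span {(xx : MvPowerSeries (Fin 2) k)}
      ⊔ (maximalIdeal (MvPowerSeries (Fin 2) k)) ^ j
        * Ideal.span {(yy : MvPowerSeries (Fin 2) k)} := by
    rw [pow_succ, max_eq_span, Ideal.span_insert, Ideal.mul_sup]
  rw [h1] at hφ
  obtain ⟨u, hu, v, hv, huv⟩ := Submodule.mem_sup.mp hφ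
  obtain ⟨a, ha, hax⟩ := Ideal.mem_mul_span_singleton.mp hu
  obtain ⟨b, hb, hby⟩ := Ideal.mem_mul_span_singleton.mp hv
  exact ⟨a, b, ha, hb, by rw [← huv, ← hax, ← hby]⟩

end Stmt2Aux


/-- Let `S = k⟦x,y⟧` with maximal ideal `n`, `f ∈ n` with
`f ∈ n^e \ n^{e+1}`, and `R = S/(f)` with maximal ideal `m`.  Let `g = gℓℓ(R)`, `i ≥ 0`,
and `z ∈ m` with `m^g ⊆ (z)`.  If `gℓℓ(R) ≤ e + i` then `ord_R(z) ≤ i + 1`. -/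
theorem stmt_2 {k : Type*} [Field k] (e i : ℕ)
    (f : MvPowerSeries (Fin 2) k)
    (n : Ideal (MvPowerSeries (Fin 2) k))
    (hn : n = maximalIdeal (MvPowerSeries (Fin 2) k))
    (hf0 : f ∈ n) (hfe : f ∈ n ^ e) (hfe' : f ∉ n ^ (e + 1))
    (m : Ideal (MvPowerSeries (Fin 2) k ⧸ Ideal.span {f}))
    (hm : m = n.map (Ideal.Quotient.mk (Ideal.span {f})))
    (z : MvPowerSeries (Fin 2) k ⧸ Ideal.span {f}) (hz : z ∈ m)
    (hwit : m ^ gll _ m ≤ Ideal.span {z})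
    (hgll : gll _ m ≤ e + i) :
    ∀ r : ℕ, z ∈ m ^ r → z ∉ m ^ (r + 1) → r ≤ i + 1 := by
  subst hn
  subst hm
  intro r hzr _hzr1
  by_contra hri
  push_neg at hri
  -- the case e = 0 is absurd
  rcases Nat.eq_zero_or_pos e with he0 | he1
  · subst he0
    exact hfe' (by rw [pow_one]; exact hf0)
  have hfne : f ≠ 0 := fun h => hfe' (h ▸ Submodule.zero_mem _)
  -- lift z to Z ∈ n^(i+2)
  have hz2 : z ∈ ((maximalIdeal (MvPowerSeries (Fin 2) k)).map
      (Ideal.Quotient.mk (Ideal.span {f}))) ^ (i + 2) :=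
    Ideal.pow_le_pow_right (by omega) hzr
  rw [← Ideal.map_pow] at hz2
  obtain ⟨Z, hZmem, hZmk⟩ := (Ideal.mem_map_iff_of_surjective _
    Ideal.Quotient.mk_surjective).mp hz2
  -- split f and Z
  have hfe2 : f ∈ (maximalIdeal (MvPowerSeries (Fin 2) k)) ^ ((e - 1) + 1) := by
    rw [show e - 1 + 1 = e by omega]; exact hfe
  obtain ⟨a, b, ha, hb, hfab⟩ := Stmt2Aux.split (e - 1) f hfe2
  obtain ⟨c, d, hc, hd, hZcd⟩ := Stmt2Aux.split (i + 1) Z hZmem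
  -- the determinant lies in n^(e+i)
  have hΔmem : a * d - b * c ∈ (maximalIdeal (MvPowerSeries (Fin 2) k)) ^ (e + i) := by
    have had : a * d ∈ (maximalIdeal (MvPowerSeries (Fin 2) k)) ^ (e + i) := by
      have := Ideal.mul_mem_mul ha hd
      rwa [← pow_add, show (e - 1) + (i + 1) = e + i by omega] at this
    have hbc : b * c ∈ (maximalIdeal (MvPowerSeries (Fin 2) k)) ^ (e + i) := by
      have := Ideal.mul_mem_mul hb hc
      rwa [← pow_add, show (e - 1) + (i + 1) = e + i by omega] at this
    exact Submodule.sub_mem _ had hbc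
  -- n^(e+i) ⊆ (f, Z)
  have hspan : ∀ u ∈ (maximalIdeal (MvPowerSeries (Fin 2) k)) ^ (e + i),
      ∃ p q, u = p * f + q * Z := by
    intro u hu
    have h1 : Ideal.Quotient.mk (Ideal.span {f}) u ∈
        ((maximalIdeal (MvPowerSeries (Fin 2) k)).map
          (Ideal.Quotient.mk (Ideal.span {f}))) ^ (e + i) := by
      rw [← Ideal.map_pow]
      exact Ideal.mem_map_of_mem _ hu
    have h2 : Ideal.Quotient.mk (Ideal.span {f}) u ∈ Ideal.span {z} :=
      hwit (Ideal.pow_le_pow_right hgll h1)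
    obtain ⟨w, hw⟩ := Ideal.mem_span_singleton'.mp h2
    obtain ⟨W, rfl⟩ := Ideal.Quotient.mk_surjective w
    have h3 : u - W * Z ∈ Ideal.span {f} := by
      rw [← Ideal.Quotient.eq_zero_iff_mem, map_sub, map_mul, hZmk, hw, sub_self]
    obtain ⟨p, hp⟩ := Ideal.mem_span_singleton'.mp h3
    exact ⟨p, W, by linear_combination -hp⟩
  obtain ⟨P, Q, hPQ⟩ := hspan _ hΔmem
  exact Stmt2Aux.core f Z a b c d P Q hfne hfab hZcd (e + i) hspan hPQ
end

section
/- Let m, n ≥ 0 be integers and let p > 3 be a prime such that 2 is a primitive root modulo p^2. Then x^2 + xy + y^2 is a nonzerodivisor on the quotient ring F_2[x,y]/( xy(x^{p^m} + y^{p^m})^{2^n} ). -/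
open MvPolynomial

set_option maxRecDepth 4000

noncomputable section

lemma irred_xx1 : Irreducible (Polynomial.X ^ 2 + Polynomial.X + 1 : Polynomial (ZMod 2)) := by
  have hE : (Polynomial.X ^ 2 + Polynomial.X + 1 : Polynomial (ZMod 2)) =
      Polynomial.C 1 * Polynomial.X ^ 2 + Polynomial.C 1 * Polynomial.X + Polynomial.C 1 := by
    simp
  have hm : (Polynomial.X ^ 2 + Polynomial.X + 1 : Polynomial (ZMod 2)).Monic := by
    rw [add_assoc]
    apply Polynomial.monic_X_pow_add
    calc Polynomial.degree (Polynomial.X + 1 : Polynomial (ZMod 2)) ≤ 1 := by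
          simpa using Polynomial.degree_X_add_C (1 : ZMod 2) |>.le
      _ < 2 := by norm_num
  have hnd : (Polynomial.X ^ 2 + Polynomial.X + 1 : Polynomial (ZMod 2)).natDegree = 2 := by
    rw [hE]; exact Polynomial.natDegree_quadratic one_ne_zero
  by_contra h
  obtain ⟨c₁, c₂, h1, h2⟩ := (hm.not_irreducible_iff_exists_add_mul_eq_coeff hnd).mp h
  simp [Polynomial.coeff_one, Polynomial.coeff_X] at h1 h2
  revert h1 h2; revert c₁ c₂; decide

lemma prime_q : Prime ((X 0) ^ 2 + X 0 * X 1 + (X 1) ^ 2 : MvPolynomial (Fin 2) (ZMod 2)) := by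
  rw [← MulEquiv.prime_iff (MvPolynomial.finSuccEquiv (ZMod 2) 1).toRingEquiv.toMulEquiv]
  have h1 : (X 1 : MvPolynomial (Fin 2) (ZMod 2)) = X (Fin.succ 0) := rfl
  set P : Polynomial (MvPolynomial (Fin 1) (ZMod 2)) :=
    Polynomial.C 1 * Polynomial.X ^ 2 + Polynomial.C (X 0) * Polynomial.X +
      Polynomial.C ((X 0) ^ 2) with hP
  have himg : ((MvPolynomial.finSuccEquiv (ZMod 2) 1).toRingEquiv.toMulEquiv)
      ((X 0) ^ 2 + X 0 * X 1 + (X 1) ^ 2) = P := by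
    show (MvPolynomial.finSuccEquiv (ZMod 2) 1) ((X 0) ^ 2 + X 0 * X 1 + (X 1) ^ 2) = P
    rw [h1]
    rw [hP, map_add, map_add, map_mul, map_pow, map_pow, finSuccEquiv_X_zero,
      finSuccEquiv_X_succ, ← Polynomial.C_pow, Polynomial.C_1, one_mul]
    ring
  rw [himg]
  apply (UniqueFactorizationMonoid.irreducible_iff_prime).mp
  have hm : P.Monic := by
    rw [hP, Polynomial.C_1, one_mul, add_assoc]
    apply Polynomial.monic_X_pow_add
    calc Polynomial.degree (Polynomial.C (X 0 : MvPolynomial (Fin 1) (ZMod 2)) * Polynomial.X +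
          Polynomial.C ((X 0) ^ 2)) ≤ 1 := Polynomial.degree_linear_le
      _ < 2 := by norm_num
  have hnd : P.natDegree = 2 := by rw [hP]; exact Polynomial.natDegree_quadratic one_ne_zero
  by_contra h
  obtain ⟨c₁, c₂, hc1, hc2⟩ := (hm.not_irreducible_iff_exists_add_mul_eq_coeff hnd).mp h
  have hco0 : P.coeff 0 = (X 0) ^ 2 := by
    rw [hP]
    simp only [Polynomial.coeff_add, Polynomial.coeff_C_mul, Polynomial.coeff_X_pow,
      Polynomial.coeff_X, Polynomial.coeff_C]
    norm_num
  have hco1 : P.coeff 1 = X 0 := by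
    rw [hP]
    simp only [Polynomial.coeff_add, Polynomial.coeff_C_mul, Polynomial.coeff_X_pow,
      Polynomial.coeff_X, Polynomial.coeff_C]
    norm_num
  rw [hco0] at hc1; rw [hco1] at hc2
  have e1 := congrArg (MvPolynomial.eval (fun _ => (1 : ZMod 2))) hc1
  have e2 := congrArg (MvPolynomial.eval (fun _ => (1 : ZMod 2))) hc2
  simp at e1 e2
  revert e1 e2
  generalize (MvPolynomial.eval (fun _ => (1 : ZMod 2))) c₁ = a
  generalize (MvPolynomial.eval (fun _ => (1 : ZMod 2))) c₂ = b
  revert a b; decide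

end

/-- Let `m, n ≥ 0` and let `p > 3` be a prime such that `2` is a
primitive root modulo `p²` (encoded: the order of `2` in `ZMod (p²)` is `φ(p²)`).
Then `x² + xy + y²` is a nonzerodivisor on `F₂[x,y]/(xy(x^{p^m} + y^{p^m})^{2^n})`. -/
theorem stmt_11 (p m n : ℕ) (hp : p.Prime) (hp3 : 3 < p)
    (hroot : orderOf (2 : ZMod (p ^ 2)) = Nat.totient (p ^ 2)) :
    Ideal.Quotient.mk
        (Ideal.span {(X 0 * X 1 * ((X 0) ^ p ^ m + (X 1) ^ p ^ m) ^ 2 ^ n :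
          MvPolynomial (Fin 2) (ZMod 2))})
        ((X 0) ^ 2 + X 0 * X 1 + (X 1) ^ 2) ∈
      nonZeroDivisors
        (MvPolynomial (Fin 2) (ZMod 2) ⧸
          Ideal.span {(X 0 * X 1 * ((X 0) ^ p ^ m + (X 1) ^ p ^ m) ^ 2 ^ n :
            MvPolynomial (Fin 2) (ZMod 2))}) := by
  classical
  haveI : Fact (Irreducible (Polynomial.X ^ 2 + Polynomial.X + 1 : Polynomial (ZMod 2))) :=
    ⟨irred_xx1⟩
  set A := AdjoinRoot (Polynomial.X ^ 2 + Polynomial.X + 1 : Polynomial (ZMod 2)) with hA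
  set ω : A := AdjoinRoot.root _ with hω'
  have hω : ω ^ 2 + ω + 1 = 0 := by
    have := AdjoinRoot.eval₂_root (Polynomial.X ^ 2 + Polynomial.X + 1 : Polynomial (ZMod 2))
    simpa using this
  haveI : CharP A 2 := charP_of_injective_ringHom (algebraMap (ZMod 2) A).injective 2
  have h2 : (1 : A) + 1 = 0 := by
    have := CharP.cast_eq_zero A 2
    push_cast at this
    linear_combination this
  have hω0 : ω ≠ 0 := by
    intro h; rw [h] at hω; simp at hω
  have hω1 : ω ≠ 1 := by
    intro h; rw [h] at hω
    rw [one_pow] at hω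
    have : (1 : A) = 0 := by linear_combination hω - h2
    simp at this
  have hω21 : ω ^ 2 ≠ 1 := by
    intro h
    apply hω0
    linear_combination hω - h - h2
  have hω3 : ω ^ 3 = 1 := by linear_combination (ω - 1) * hω
  -- p^m mod 3 is 1 or 2
  have h3p : ¬ (3 ∣ p ^ m) := by
    intro h
    have h3 : Nat.Prime 3 := by norm_num
    have := (Nat.Prime.dvd_of_dvd_pow h3 h)
    have := (Nat.prime_dvd_prime_iff_eq h3 hp).mp this
    omega
  have hmod : p ^ m % 3 = 1 ∨ p ^ m % 3 = 2 := by
    have h1 : p ^ m % 3 < 3 := Nat.mod_lt _ (by norm_num)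
    have h2 : p ^ m % 3 ≠ 0 := fun h => h3p (Nat.dvd_of_mod_eq_zero h)
    omega
  have hωpm : ω ^ p ^ m ≠ 1 := by
    rw [pow_eq_pow_mod (p ^ m) hω3]
    rcases hmod with h | h <;> rw [h]
    · simpa using hω1
    · exact hω21
  have hkey : ω ^ p ^ m + 1 ≠ 0 := by
    intro h
    apply hωpm
    linear_combination h - h2
  -- the evaluation homomorphism
  set φ : MvPolynomial (Fin 2) (ZMod 2) →+* A :=
    (MvPolynomial.aeval (fun i : Fin 2 => if i = 0 then ω else 1)).toRingHom with hφ
  have hφx : φ (X 0) = ω := by simp [hφ]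
  have hφy : φ (X 1) = 1 := by simp [hφ]
  set f : MvPolynomial (Fin 2) (ZMod 2) :=
    X 0 * X 1 * ((X 0) ^ p ^ m + (X 1) ^ p ^ m) ^ 2 ^ n with hf
  set q : MvPolynomial (Fin 2) (ZMod 2) := (X 0) ^ 2 + X 0 * X 1 + (X 1) ^ 2 with hq
  have hφq : φ q = 0 := by
    rw [hq, map_add, map_add, map_mul, map_pow, map_pow, hφx, hφy]
    linear_combination hω
  have hφf : φ f ≠ 0 := by
    rw [hf, map_mul, map_mul, map_pow, map_add, map_pow, map_pow, hφx, hφy, one_pow, mul_one]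
    exact mul_ne_zero hω0 (pow_ne_zero _ hkey)
  have hqf : ¬ q ∣ f := by
    rintro ⟨c, hcc⟩
    rw [hcc, map_mul, hφq, zero_mul] at hφf
    exact hφf rfl
  -- main argument
  rw [mem_nonZeroDivisors_iff_right]
  intro z hz
  obtain ⟨g, rfl⟩ := Ideal.Quotient.mk_surjective z
  rw [← map_mul, Ideal.Quotient.eq_zero_iff_mem, Ideal.mem_span_singleton] at hz
  obtain ⟨c, hc⟩ := hz
  have hqc : q ∣ c := by
    refine (prime_q.2.2 f c ?_).resolve_left hqf
    exact ⟨g, by rw [← hc]; ring⟩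
  obtain ⟨c', rfl⟩ := hqc
  have hg : g = f * c' := by
    have hqne : q ≠ 0 := prime_q.ne_zero
    apply mul_right_cancel₀ hqne
    rw [hc]; ring
  rw [Ideal.Quotient.eq_zero_iff_mem, Ideal.mem_span_singleton]
  exact ⟨c', hg⟩
end
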